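/- Let X be a finite set and f : X → X a function, and let N = (card X)!, the factorial of the cardinality of X. Then the N-th iterate f^[N] is idempotent under composition (f^[N] ∘ f^[N] = f^[N]), and it is the unique idempotent iterate: for every m ≥ 1, if f^[m] ∘ f^[m] = f^[m] then f^[m] = f^[N]. -/

import Mathlib

private lemma iter_idem_aux {X : Type*} (f : X → X) (m : ℕ)
    (h : f^[m] ∘ f^[m] = f^[m]) : ∀ k, f^[(k + 1) * m] = f^[m] := by
  intro k
  induction k with
  | zero => simp
  | succ k ih =>
    rw [add_mul, one_mul, Function.iterate_add, ih, h]

/-- For a function `f` on a finite set `X`, the `(card X)!`-th iterate of `f` is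
idempotent, and it is the unique idempotent iterate of `f` with positive exponent. -/
theorem iterate_factorial_idempotent (X : Type*) [Fintype X] (f : X → X) :
    (f^[(Fintype.card X).factorial] ∘ f^[(Fintype.card X).factorial]
        = f^[(Fintype.card X).factorial]) ∧
      ∀ m : ℕ, 1 ≤ m → f^[m] ∘ f^[m] = f^[m] → f^[m] = f^[(Fintype.card X).factorial] := by
  set n := Fintype.card X with hn
  set N := n.factorial with hN
  have hNpos : 1 ≤ N := Nat.factorial_pos n
  have hmain : f^[N] ∘ f^[N] = f^[N] := by
    funext x
    simp only [Function.comp_apply, ← Function.iterate_add_apply]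
    -- pigeonhole: among x, f x, ..., f^[n] x two coincide
    have hcard : Fintype.card X < Fintype.card (Fin (n + 1)) := by simp; exact le_rfl
    obtain ⟨a, b, hab, heq⟩ :=
      Fintype.exists_ne_map_eq_of_card_lt (fun i : Fin (n + 1) => f^[(i : ℕ)] x) hcard
    wlog hlt : (a : ℕ) < (b : ℕ) generalizing a b
    · exact this b a hab.symm heq.symm
        (lt_of_le_of_ne (not_lt.mp hlt) (fun h => hab (Fin.ext h.symm)))
    set t := (a : ℕ)
    set p := (b : ℕ) - t
    have hp1 : 1 ≤ p := Nat.sub_pos_of_lt hlt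
    have hpn : p ≤ n := le_trans (Nat.sub_le _ _) (Nat.lt_succ_iff.mp b.isLt)
    have hpd : p ∣ N := Nat.dvd_factorial hp1 hpn
    have htN : t ≤ N := le_trans (le_of_lt hlt)
      (le_trans (Nat.lt_succ_iff.mp b.isLt) (Nat.self_le_factorial n))
    have hper : f^[p] (f^[t] x) = f^[t] x := by
      rw [← Function.iterate_add_apply, Nat.sub_add_cancel (le_of_lt hlt)]
      exact heq.symm
    have hperN : f^[N] (f^[t] x) = f^[t] x := by
      obtain ⟨c, hc⟩ := hpd
      have : Function.IsPeriodicPt f p (f^[t] x) := hper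
      have := this.const_mul c
      have h2 : f^[c * p] (f^[t] x) = f^[t] x := this
      rw [hc, mul_comm]; exact h2
    have hx : f^[N] x = f^[N - t] (f^[t] x) := by
      rw [← Function.iterate_add_apply, Nat.sub_add_cancel htN]
    rw [show N + N = N + (N - t) + t by omega, Function.iterate_add_apply,
      Function.iterate_add_apply, ← Function.iterate_add_apply,
      show N + (N - t) = (N - t) + N by omega, Function.iterate_add_apply,
      hperN, ← hx]
  refine ⟨hmain, fun m hm hidem => ?_⟩
  have h1 : f^[N * m] = f^[m] := by
    have := iter_idem_aux f m hidem (N - 1)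
    rwa [Nat.sub_add_cancel hNpos] at this
  have h2 : f^[m * N] = f^[N] := by
    have := iter_idem_aux f N hmain (m - 1)
    rwa [Nat.sub_add_cancel hm] at this
  rw [← h1, mul_comm, h2]
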